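/- Let φ : ℝ → ℝ be continuous with φ([0,1]) ⊆ [0,1] and φ(0), φ(1) ∈ {0,1}. Suppose the directed intervals of φ are precisely (a₁,b₁), …, (a_N,b_N) with b_i ≤ a_{i+1} for all i, and N ≥ 1. Then φ(a₁) = φ(0), φ(b_N) = φ(1), and φ(a_{i+1}) = φ(b_i) for every 1 ≤ i ≤ N−1. In particular consecutive directed intervals alternate between ascending and descending. -/
import Mathlib


open Set

/-- `(a,b)` is a directed interval of `φ`: `0 ≤ a < b ≤ 1`, the values `φ a`, `φ b` lie
in `{0,1}` and differ, and `φ` maps `(a,b)` into `(0,1)`. -/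
def IsDirectedInterval (φ : ℝ → ℝ) (a b : ℝ) : Prop :=
  0 ≤ a ∧ a < b ∧ b ≤ 1 ∧ φ a ∈ ({0, 1} : Set ℝ) ∧ φ b ∈ ({0, 1} : Set ℝ) ∧
    φ a ≠ φ b ∧ ∀ x ∈ Ioo a b, φ x ∈ Ioo (0 : ℝ) 1


lemma exists_DI (φ : ℝ → ℝ) (hφ : Continuous φ)
    (hmaps : MapsTo φ (Icc (0 : ℝ) 1) (Icc (0 : ℝ) 1))
    (u v : ℝ) (huv : u < v) (hu0 : 0 ≤ u) (hv1 : v ≤ 1)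
    (hu : φ u ∈ ({0, 1} : Set ℝ)) (hv : φ v ∈ ({0, 1} : Set ℝ))
    (hne : φ u ≠ φ v) :
    ∃ x y, IsDirectedInterval φ x y ∧ u ≤ x ∧ y ≤ v := by
  set c := φ v with hc
  set T : Set ℝ := Icc u v ∩ φ ⁻¹' {c} with hT
  have hTclosed : IsClosed T := isClosed_Icc.inter (isClosed_singleton.preimage hφ)
  have hTne : T.Nonempty := ⟨v, ⟨le_of_lt huv, le_refl v⟩, rfl⟩
  have hTbdd : BddBelow T := ⟨u, fun x hx => hx.1.1⟩
  set b := sInf T with hb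
  have hbT : b ∈ T := hTclosed.csInf_mem hTne hTbdd
  have hub : u ≤ b := le_csInf hTne (fun x hx => hx.1.1)
  have hbv : b ≤ v := csInf_le hTbdd ⟨⟨le_of_lt huv, le_refl v⟩, rfl⟩
  have hφb : φ b = c := hbT.2
  have hub' : u < b := lt_of_le_of_ne hub (fun h => hne (by rw [h]; exact hφb))
  set S : Set ℝ := Icc u b ∩ φ ⁻¹' {φ u} with hS
  have hSclosed : IsClosed S := isClosed_Icc.inter (isClosed_singleton.preimage hφ)
  have hSne : S.Nonempty := ⟨u, ⟨le_refl u, hub⟩, rfl⟩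
  have hSbdd : BddAbove S := ⟨b, fun x hx => hx.1.2⟩
  set a := sSup S with ha
  have haS : a ∈ S := hSclosed.csSup_mem hSne hSbdd
  have hua : u ≤ a := haS.1.1
  have hab : a ≤ b := haS.1.2
  have hφa : φ a = φ u := haS.2
  have hab' : a < b := lt_of_le_of_ne hab (fun h => hne (by rw [← hφa, h, hφb]))
  refine ⟨a, b, ⟨hu0.trans hua, hab', hbv.trans hv1, hφa ▸ hu, hφb ▸ hv,
    by rw [hφa, hφb]; exact hne, ?_⟩, hua, hbv⟩
  intro x hx
  have hxu : u < x := lt_of_le_of_lt hua hx.1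
  have hxv : x < v := lt_of_lt_of_le hx.2 hbv
  have hx01 : φ x ∈ Icc (0:ℝ) 1 := hmaps ⟨hu0.trans hxu.le, hxv.le.trans hv1⟩
  have hxnu : φ x ≠ φ u := by
    intro h
    have : x ∈ S := ⟨⟨hxu.le, hx.2.le⟩, h⟩
    exact absurd (le_csSup hSbdd this) (not_le.2 hx.1)
  have hxnc : φ x ≠ c := by
    intro h
    have : x ∈ T := ⟨⟨hxu.le, hxv.le⟩, h⟩
    exact absurd (csInf_le hTbdd this) (not_le.2 hx.2)
  have h0' : φ x ≠ 0 := by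
    rcases hu with h | h
    · exact h ▸ hxnu
    · rcases hv with h' | h'
      · exact h' ▸ hxnc
      · exact absurd (h.trans h'.symm) hne
  have h1' : φ x ≠ 1 := by
    rcases hu with h | h
    · rcases hv with h' | h'
      · exact absurd (h.trans h'.symm) hne
      · exact h' ▸ hxnc
    · exact h ▸ hxnu
  exact ⟨lt_of_le_of_ne hx01.1 (Ne.symm h0'), lt_of_le_of_ne hx01.2 h1'⟩

/-- The value of `φ` at the left end of the first directed interval is `φ 0`, at the right
end of the last one is `φ 1`, and consecutive directed intervals share endpoint values;
in particular consecutive directed intervals alternate between ascending and descending. -/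
theorem directed_intervals_alternate (φ : ℝ → ℝ) (hφ : Continuous φ)
    (hmaps : MapsTo φ (Icc (0 : ℝ) 1) (Icc (0 : ℝ) 1))
    (h0 : φ 0 ∈ ({0, 1} : Set ℝ)) (h1 : φ 1 ∈ ({0, 1} : Set ℝ))
    (N : ℕ) (hN : 1 ≤ N) (a b : Fin N → ℝ)
    (hdir : ∀ i, IsDirectedInterval φ (a i) (b i))
    (hall : ∀ x y : ℝ, IsDirectedInterval φ x y → ∃ i, a i = x ∧ b i = y)
    (horder : ∀ i j : Fin N, (i : ℕ) + 1 = (j : ℕ) → b i ≤ a j) :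
    φ (a ⟨0, hN⟩) = φ 0 ∧ φ (b ⟨N - 1, by omega⟩) = φ 1 ∧
      (∀ i j : Fin N, (i : ℕ) + 1 = (j : ℕ) → φ (a j) = φ (b i)) ∧
      (∀ i j : Fin N, (i : ℕ) + 1 = (j : ℕ) →
        ((φ (a i) = 0 ∧ φ (b i) = 1) ↔ (φ (a j) = 1 ∧ φ (b j) = 0))) := by
  -- chain ordering
  have key : ∀ n : ℕ, ∀ i j : Fin N, (i : ℕ) + n + 1 = (j : ℕ) → b i ≤ a j := by
    intro n
    induction n with
    | zero => intro i j h; exact horder i j (by omega)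
    | succ n ih =>
      intro i j h
      have hkN : (i : ℕ) + n + 1 < N := by omega
      have hk : b i ≤ a ⟨(i : ℕ) + n + 1, hkN⟩ := ih i ⟨(i : ℕ) + n + 1, hkN⟩ rfl
      have hk2 : a ⟨(i : ℕ) + n + 1, hkN⟩ < b ⟨(i : ℕ) + n + 1, hkN⟩ :=
        (hdir ⟨(i : ℕ) + n + 1, hkN⟩).2.1
      have hk3 : b ⟨(i : ℕ) + n + 1, hkN⟩ ≤ a j := horder ⟨(i : ℕ) + n + 1, hkN⟩ j (by simp; omega)
      linarith
  have hchain : ∀ i j : Fin N, (i : ℕ) < (j : ℕ) → b i ≤ a j := by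
    intro i j h
    exact key ((j : ℕ) - (i : ℕ) - 1) i j (by omega)
  set i0 : Fin N := ⟨0, hN⟩ with hi0
  set iN : Fin N := ⟨N - 1, by omega⟩ with hiN
  have hle_a : ∀ i : Fin N, a i0 ≤ a i := by
    intro i
    rcases Nat.eq_zero_or_pos (i : ℕ) with h | h
    · have : i = i0 := Fin.ext h
      rw [this]
    · exact le_of_lt (lt_of_lt_of_le (hdir i0).2.1 (hchain i0 i h))
  have hble : ∀ i : Fin N, b i ≤ b iN := by
    intro i
    rcases eq_or_lt_of_le (Nat.le_sub_one_of_lt i.2) with h | h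
    · have : i = iN := Fin.ext h
      rw [this]
    · exact le_of_lt (lt_of_le_of_lt (hchain i iN h) (hdir iN).2.1)
  have claim1 : φ (a i0) = φ 0 := by
    by_contra hne'
    have h0a : 0 ≤ a i0 := (hdir i0).1
    rcases eq_or_lt_of_le h0a with h | h
    · exact hne' (by rw [← h])
    · obtain ⟨x, y, hxy, hux, hyv⟩ := exists_DI φ hφ hmaps 0 (a i0) h le_rfl
        (le_of_lt (lt_of_lt_of_le (hdir i0).2.1 (hdir i0).2.2.1)) h0 (hdir i0).2.2.2.1
        (Ne.symm hne')
      obtain ⟨k, hka, hkb⟩ := hall x y hxy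
      have := hle_a k
      have := hxy.2.1
      rw [hka, hkb] at *
      linarith
  have claim2 : φ (b iN) = φ 1 := by
    by_contra hne'
    have hb1 : b iN ≤ 1 := (hdir iN).2.2.1
    rcases eq_or_lt_of_le hb1 with h | h
    · exact hne' (by rw [h])
    · obtain ⟨x, y, hxy, hux, hyv⟩ := exists_DI φ hφ hmaps (b iN) 1 h
        (le_of_lt (lt_of_le_of_lt (hdir iN).1 (hdir iN).2.1)) le_rfl
        (hdir iN).2.2.2.2.1 h1 hne'
      obtain ⟨k, hka, hkb⟩ := hall x y hxy
      have := hble k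
      have := hxy.2.1
      rw [hka, hkb] at *
      linarith
  have claim3 : ∀ i j : Fin N, (i : ℕ) + 1 = (j : ℕ) → φ (a j) = φ (b i) := by
    intro i j hij
    by_contra hne'
    have hba : b i ≤ a j := horder i j hij
    rcases eq_or_lt_of_le hba with h | h
    · exact hne' (by rw [← h])
    · obtain ⟨x, y, hxy, hux, hyv⟩ := exists_DI φ hφ hmaps (b i) (a j) h
        (le_of_lt (lt_of_le_of_lt (hdir i).1 (hdir i).2.1))
        (le_of_lt (lt_of_lt_of_le (hdir j).2.1 (hdir j).2.2.1))
        (hdir i).2.2.2.2.1 (hdir j).2.2.2.1 (Ne.symm hne')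
      obtain ⟨k, hka, hkb⟩ := hall x y hxy
      have hkk : a k < b k := (hdir k).2.1
      rw [hka, hkb] at hkk
      have hcase : (k : ℕ) ≤ (i : ℕ) ∨ (j : ℕ) ≤ (k : ℕ) := by omega
      rcases hcase with hc | hc
      · rcases eq_or_lt_of_le hc with hc' | hc'
        · have : k = i := Fin.ext hc'
          rw [this] at hka
          linarith [(hdir i).2.1]
        · have := hchain k i hc'
          rw [hkb] at this
          linarith [(hdir i).2.1]
      · rcases eq_or_lt_of_le hc with hc' | hc'
        · have : j = k := Fin.ext hc'
          rw [← this] at hkb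
          linarith [(hdir j).2.1]
        · have := hchain j k hc'
          rw [hka] at this
          linarith [(hdir j).2.1]
  refine ⟨claim1, claim2, claim3, ?_⟩
  intro i j hij
  have h3 := claim3 i j hij
  have hai := (hdir i).2.2.2.1
  have hbi := (hdir i).2.2.2.2.1
  have hnei := (hdir i).2.2.2.2.2.1
  have haj := (hdir j).2.2.2.1
  have hbj := (hdir j).2.2.2.2.1
  have hnej := (hdir j).2.2.2.2.2.1
  simp only [mem_insert_iff, mem_singleton_iff] at hai hbi haj hbj
  constructor
  · rintro ⟨e1, e2⟩
    have haj1 : φ (a j) = 1 := h3.trans e2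
    refine ⟨haj1, ?_⟩
    rcases hbj with h | h
    · exact h
    · exact absurd (haj1.trans h.symm) hnej
  · rintro ⟨e1, e2⟩
    have hbi1 : φ (b i) = 1 := h3.symm.trans e1
    refine ⟨?_, hbi1⟩
    rcases hai with h | h
    · exact h
    · exact absurd (h.trans hbi1.symm) hnei
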